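/- Let n be a positive integer, let D₀ and D be n×n complex Hermitian positive definite matrices, and let u ∈ ℂ^n be nonzero. Define F₀ = D₀⁻¹ u (u^H D₀⁻¹ u)⁻¹ u^H D₀⁻¹. Then u^H D⁻¹ u and u^H D₀⁻¹ u are positive reals, tr(F₀ (D − D₀)) is real, and log(u^H D⁻¹ u) ≥ log(u^H D₀⁻¹ u) − tr(F₀ (D − D₀)), with equality when D = D₀. -/

import Mathlib

open Matrix
open scoped ComplexOrder

lemma cs_dot (n : ℕ) (x y : Fin n → ℂ) :
    Complex.normSq (star x ⬝ᵥ y) ≤ (star x ⬝ᵥ x).re * (star y ⬝ᵥ y).re := by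
  let x' : EuclideanSpace ℂ (Fin n) := WithLp.toLp 2 x
  let y' : EuclideanSpace ℂ (Fin n) := WithLp.toLp 2 y
  have h1 : (inner ℂ x' y' : ℂ) = star x ⬝ᵥ y := by
    simp [PiLp.inner_apply, dotProduct, mul_comm, x', y']
  have h2 : (inner ℂ x' x' : ℂ) = star x ⬝ᵥ x := by
    simp [PiLp.inner_apply, dotProduct, mul_comm, x', -inner_self_eq_norm_sq_to_K]
  have h3 : (inner ℂ y' y' : ℂ) = star y ⬝ᵥ y := by
    simp [PiLp.inner_apply, dotProduct, mul_comm, y', -inner_self_eq_norm_sq_to_K]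
  have hcs := norm_inner_le_norm (𝕜 := ℂ) x' y'
  have hx : (star x ⬝ᵥ x).re = ‖x'‖ ^ 2 := by
    rw [← h2]; exact_mod_cast (inner_self_eq_norm_sq (𝕜 := ℂ) x')
  have hy : (star y ⬝ᵥ y).re = ‖y'‖ ^ 2 := by
    rw [← h3]; exact_mod_cast (inner_self_eq_norm_sq (𝕜 := ℂ) y')
  have h4 : Complex.normSq (star x ⬝ᵥ y) = ‖(inner ℂ x' y' : ℂ)‖ ^ 2 := by
    rw [h1, ← Complex.sq_norm]
  rw [h4, hx, hy, ← mul_pow]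
  exact pow_le_pow_left₀ (norm_nonneg _) hcs 2

lemma dot_self_im (n : ℕ) (w : Fin n → ℂ) : (star w ⬝ᵥ w).im = 0 := by
  have : star w ⬝ᵥ w = ((∑ i, Complex.normSq (w i) : ℝ) : ℂ) := by
    push_cast
    exact Finset.sum_congr rfl fun i _ => (Complex.normSq_eq_conj_mul_self).symm
  rw [this, Complex.ofReal_im]

lemma trace_vmv (n : ℕ) (v w : Fin n → ℂ) (M : Matrix (Fin n) (Fin n) ℂ) :
    (vecMulVec v w * M).trace = w ⬝ᵥ M *ᵥ v := by
  simp only [trace, diag, mul_apply, vecMulVec_apply, dotProduct, mulVec, Finset.mul_sum]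
  rw [Finset.sum_comm]
  exact Finset.sum_congr rfl fun j _ => Finset.sum_congr rfl fun i _ => by ring

lemma herm_shift (n : ℕ) (A B : Matrix (Fin n) (Fin n) ℂ) (hA : A.IsHermitian)
    (p q : Fin n → ℂ) :
    star (A *ᵥ p) ⬝ᵥ B *ᵥ q = star p ⬝ᵥ (A * B) *ᵥ q := by
  rw [star_mulVec, hA.eq, ← Matrix.mulVec_mulVec, dotProduct_mulVec, dotProduct_mulVec, dotProduct_mulVec]

/-- MM lower bound (equation (19)): for Hermitian positive definite `D₀, D` and nonzero `u`,
with `F₀ = D₀⁻¹ u (u^H D₀⁻¹ u)⁻¹ u^H D₀⁻¹`, the quadratic forms `u^H D⁻¹ u` and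
`u^H D₀⁻¹ u` are positive reals, `tr(F₀ (D − D₀))` is real, and
`log(u^H D⁻¹ u) ≥ log(u^H D₀⁻¹ u) − tr(F₀ (D − D₀))`, with equality when `D = D₀`. -/
theorem mm_log_quadratic_form_lower_bound
    (n : ℕ) (hn : 0 < n)
    (D₀ D : Matrix (Fin n) (Fin n) ℂ)
    (hD₀ : D₀.PosDef) (hD : D.PosDef)
    (u : Fin n → ℂ) (hu : u ≠ 0)
    (F₀ : Matrix (Fin n) (Fin n) ℂ)
    (hF₀ : F₀ = (star u ⬝ᵥ D₀⁻¹ *ᵥ u)⁻¹ • vecMulVec (D₀⁻¹ *ᵥ u) (star u ᵥ* D₀⁻¹)) :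
    (star u ⬝ᵥ D⁻¹ *ᵥ u).im = 0 ∧ 0 < (star u ⬝ᵥ D⁻¹ *ᵥ u).re ∧
    (star u ⬝ᵥ D₀⁻¹ *ᵥ u).im = 0 ∧ 0 < (star u ⬝ᵥ D₀⁻¹ *ᵥ u).re ∧
    ((F₀ * (D - D₀)).trace).im = 0 ∧
    Real.log (star u ⬝ᵥ D⁻¹ *ᵥ u).re ≥
      Real.log (star u ⬝ᵥ D₀⁻¹ *ᵥ u).re - ((F₀ * (D - D₀)).trace).re ∧
    (D = D₀ →
      Real.log (star u ⬝ᵥ D⁻¹ *ᵥ u).re =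
        Real.log (star u ⬝ᵥ D₀⁻¹ *ᵥ u).re - ((F₀ * (D - D₀)).trace).re) := by
  have posa : (0:ℂ) < star u ⬝ᵥ D⁻¹ *ᵥ u := hD.inv.dotProduct_mulVec_pos hu
  have posc : (0:ℂ) < star u ⬝ᵥ D₀⁻¹ *ᵥ u := hD₀.inv.dotProduct_mulVec_pos hu
  have hare : 0 < (star u ⬝ᵥ D⁻¹ *ᵥ u).re := by simpa using (Complex.lt_def.mp posa).1
  have haim : (star u ⬝ᵥ D⁻¹ *ᵥ u).im = 0 := by simpa using ((Complex.lt_def.mp posa).2).symm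
  have hcre : 0 < (star u ⬝ᵥ D₀⁻¹ *ᵥ u).re := by simpa using (Complex.lt_def.mp posc).1
  have hcim : (star u ⬝ᵥ D₀⁻¹ *ᵥ u).im = 0 := by simpa using ((Complex.lt_def.mp posc).2).symm
  -- invertibility
  have hdet₀ : IsUnit D₀.det := (Matrix.isUnit_iff_isUnit_det _).1 hD₀.isUnit
  have hD₀inv : D₀ * D₀⁻¹ = 1 := Matrix.mul_nonsing_inv _ hdet₀
  -- square root of D
  open scoped MatrixOrder in
  have hSS : CFC.sqrt D * CFC.sqrt D = D := CFC.sqrt_mul_sqrt_self D hD.posSemidef.nonneg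
  open scoped MatrixOrder in
  set S : Matrix (Fin n) (Fin n) ℂ := CFC.sqrt D with hSdef
  open scoped MatrixOrder in
  have hSH : S.IsHermitian := (CFC.sqrt_nonneg D).posSemidef.1
  have hdetS : IsUnit S.det := by
    have h1 : IsUnit (S.det * S.det) := by
      rw [← Matrix.det_mul, hSS]
      exact (Matrix.isUnit_iff_isUnit_det _).1 hD.isUnit
    exact isUnit_of_mul_isUnit_left h1
  have hSinv : S * S⁻¹ = 1 := Matrix.mul_nonsing_inv _ hdetS
  have hDinv : D⁻¹ = S⁻¹ * S⁻¹ := by rw [← hSS, Matrix.mul_inv_rev]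
  have hSinvH : (S⁻¹).IsHermitian := hSH.inv
  -- express the three scalars via S
  have hax : star u ⬝ᵥ D⁻¹ *ᵥ u = star (S⁻¹ *ᵥ u) ⬝ᵥ (S⁻¹ *ᵥ u) := by
    rw [herm_shift n S⁻¹ S⁻¹ hSinvH u u, ← hDinv]
  have hs : star (D₀⁻¹ *ᵥ u) ⬝ᵥ D *ᵥ (D₀⁻¹ *ᵥ u)
      = star (S *ᵥ (D₀⁻¹ *ᵥ u)) ⬝ᵥ (S *ᵥ (D₀⁻¹ *ᵥ u)) := by
    rw [herm_shift n S S hSH _ _, hSS]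
  have hcv : star (D₀⁻¹ *ᵥ u) ⬝ᵥ u = star u ⬝ᵥ D₀⁻¹ *ᵥ u := by
    rw [star_mulVec, hD₀.inv.1.eq, ← dotProduct_mulVec]
  have hcx : star u ⬝ᵥ D₀⁻¹ *ᵥ u = star (S *ᵥ (D₀⁻¹ *ᵥ u)) ⬝ᵥ (S⁻¹ *ᵥ u) := by
    rw [herm_shift n S S⁻¹ hSH _ _, hSinv, Matrix.one_mulVec, hcv]
  -- Cauchy-Schwarz
  have hCS0 := cs_dot n (S *ᵥ (D₀⁻¹ *ᵥ u)) (S⁻¹ *ᵥ u)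
  rw [← hcx, ← hs, ← hax] at hCS0
  have hnsq : Complex.normSq (star u ⬝ᵥ D₀⁻¹ *ᵥ u) = (star u ⬝ᵥ D₀⁻¹ *ᵥ u).re ^ 2 := by
    rw [Complex.normSq_apply, hcim]; ring
  rw [hnsq] at hCS0
  -- realness of s
  have hsim : (star (D₀⁻¹ *ᵥ u) ⬝ᵥ D *ᵥ (D₀⁻¹ *ᵥ u)).im = 0 := by
    rw [hs]; exact dot_self_im n _
  -- trace computation
  have htr : (F₀ * (D - D₀)).trace = (star u ⬝ᵥ D₀⁻¹ *ᵥ u)⁻¹ *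
      ((star (D₀⁻¹ *ᵥ u) ⬝ᵥ D *ᵥ (D₀⁻¹ *ᵥ u)) - star u ⬝ᵥ D₀⁻¹ *ᵥ u) := by
    rw [hF₀, Matrix.smul_mul, Matrix.trace_smul, trace_vmv, smul_eq_mul]
    congr 1
    rw [Matrix.sub_mulVec, dotProduct_sub]
    congr 1
    · rw [star_mulVec, hD₀.inv.1.eq]
    · rw [Matrix.mulVec_mulVec, hD₀inv, Matrix.one_mulVec, ← dotProduct_mulVec]
  -- realness of trace
  obtain ⟨br, hbr⟩ : ∃ x : ℝ, star u ⬝ᵥ D₀⁻¹ *ᵥ u = (x : ℂ) :=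
    ⟨_, Complex.ext rfl (by rw [hcim, Complex.ofReal_im])⟩
  obtain ⟨sr, hsr⟩ : ∃ x : ℝ, star (D₀⁻¹ *ᵥ u) ⬝ᵥ D *ᵥ (D₀⁻¹ *ᵥ u) = (x : ℂ) :=
    ⟨_, Complex.ext rfl (by rw [hsim, Complex.ofReal_im])⟩
  have hbre : (star u ⬝ᵥ D₀⁻¹ *ᵥ u).re = br := by rw [hbr, Complex.ofReal_re]
  have hsre : (star (D₀⁻¹ *ᵥ u) ⬝ᵥ D *ᵥ (D₀⁻¹ *ᵥ u)).re = sr := by rw [hsr, Complex.ofReal_re]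
  have hbrpos : 0 < br := hbre ▸ hcre
  have htr' : (F₀ * (D - D₀)).trace = ((br⁻¹ * (sr - br) : ℝ) : ℂ) := by
    rw [htr, hbr, hsr]
    push_cast
    ring
  have htrim : ((F₀ * (D - D₀)).trace).im = 0 := by rw [htr', Complex.ofReal_im]
  have htrre : ((F₀ * (D - D₀)).trace).re = br⁻¹ * (sr - br) := by
    rw [htr', Complex.ofReal_re]
  -- the real inequality
  have hCS1 : br ^ 2 ≤ sr * (star u ⬝ᵥ D⁻¹ *ᵥ u).re := by
    rw [← hbre, ← hsre]; exact hCS0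
  have hineq : Real.log (star u ⬝ᵥ D⁻¹ *ᵥ u).re ≥
      Real.log (star u ⬝ᵥ D₀⁻¹ *ᵥ u).re - ((F₀ * (D - D₀)).trace).re := by
    rw [htrre, hbre]
    have hba : br / (star u ⬝ᵥ D⁻¹ *ᵥ u).re ≤ sr / br := by
      rw [div_le_div_iff₀ hare hbrpos]
      nlinarith [hCS1]
    have hlog : Real.log (br / (star u ⬝ᵥ D⁻¹ *ᵥ u).re) ≤ br / (star u ⬝ᵥ D⁻¹ *ᵥ u).re - 1 :=
      Real.log_le_sub_one_of_pos (div_pos hbrpos hare)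
    rw [Real.log_div (ne_of_gt hbrpos) (ne_of_gt hare)] at hlog
    have h1 : sr / br = br⁻¹ * sr := by rw [div_eq_inv_mul]
    have h2 : br⁻¹ * br = 1 := inv_mul_cancel₀ (ne_of_gt hbrpos)
    have h3 : br⁻¹ * (sr - br) = br⁻¹ * sr - 1 := by rw [mul_sub, h2]
    linarith
  refine ⟨haim, hare, hcim, hcre, htrim, hineq, ?_⟩
  intro hDD
  subst hDD
  rw [sub_self, Matrix.mul_zero, Matrix.trace_zero]
  simp
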